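/- For the function s(c,x) = ((1+x)/2)·log₂((1+x)/(1+cx)) + ((1-x)/2)·log₂((1-x)/(1-cx)), defined for |c| < 1 and |x| ≤ 1, the partial derivative with respect to c is nonpositive; hence s(c,x) is nonincreasing in c for each fixed x. -/

import Mathlib

open Real

/-- The relative-entropy function s(c,x) for spin-1/2 noisy approximations
(base-2 logarithm, Lean's convention `logb 2 0 = 0` covers `0 · log 0 = 0`). -/
noncomputable def sFun (c x : ℝ) : ℝ :=
  (1 + x) / 2 * Real.logb 2 ((1 + x) / (1 + c * x))
    + (1 - x) / 2 * Real.logb 2 ((1 - x) / (1 - c * x))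

lemma sFun_eq (c x : ℝ) (hp : 1 + c * x ≠ 0) (hq : 1 - c * x ≠ 0) :
    sFun c x = (1 + x) / 2 * (Real.log (1 + x) / Real.log 2 - Real.log (1 + c * x) / Real.log 2)
      + (1 - x) / 2 * (Real.log (1 - x) / Real.log 2 - Real.log (1 - c * x) / Real.log 2) := by
  unfold sFun
  simp only [Real.logb]
  congr 1
  · rcases eq_or_ne (1 + x) 0 with h | h
    · simp [h]
    · rw [Real.log_div h hp]; ring
  · rcases eq_or_ne (1 - x) 0 with h | h
    · simp [h]
    · rw [Real.log_div h hq]; ring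

lemma sFun_hasDerivAt (x : ℝ) (hx : |x| ≤ 1) (c : ℝ) (hc : |c| < 1) :
    HasDerivAt (fun c => sFun c x)
      (x ^ 2 * (c - 1) / (Real.log 2 * ((1 + c * x) * (1 - c * x)))) c := by
  have hL : (0:ℝ) < Real.log 2 := Real.log_pos one_lt_two
  have hcx : ∀ c' : ℝ, |c'| < 1 → |c' * x| < 1 := by
    intro c' hc'
    calc |c' * x| = |c'| * |x| := abs_mul _ _
      _ ≤ |c'| * 1 := by nlinarith [abs_nonneg c']
      _ < 1 := by linarith
  have hp : 0 < 1 + c * x := by have := (abs_lt.mp (hcx c hc)).1; linarith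
  have hq : 0 < 1 - c * x := by have := (abs_lt.mp (hcx c hc)).2; linarith
  set L := Real.log 2
  set g : ℝ → ℝ := fun c' =>
    (1 + x) / 2 * (Real.log (1 + x) / L - Real.log (1 + c' * x) / L)
      + (1 - x) / 2 * (Real.log (1 - x) / L - Real.log (1 - c' * x) / L) with hg_def
  have h1 : HasDerivAt (fun c' : ℝ => 1 + c' * x) x c := by
    simpa using ((hasDerivAt_id c).mul_const x).const_add 1
  have h2 : HasDerivAt (fun c' : ℝ => 1 - c' * x) (-x) c := by
    simpa using ((hasDerivAt_id c).mul_const x).const_sub 1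
  have hlog1 := h1.log hp.ne'
  have hlog2 := h2.log hq.ne'
  have hg : HasDerivAt g
      ((1 + x) / 2 * -(x / (1 + c * x) / L) + (1 - x) / 2 * -(-x / (1 - c * x) / L)) c := by
    exact (((hlog1.div_const L).const_sub _).const_mul _).add
      (((hlog2.div_const L).const_sub _).const_mul _)
  have hev : (fun c => sFun c x) =ᶠ[nhds c] g := by
    have hopen : IsOpen {c' : ℝ | |c'| < 1} := by
      have : {c' : ℝ | |c'| < 1} = Set.Ioo (-1) 1 := by
        ext y; simp [abs_lt]
      rw [this]; exact isOpen_Ioo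
    filter_upwards [hopen.mem_nhds hc] with c' hc'
    have hp' : 0 < 1 + c' * x := by have := (abs_lt.mp (hcx c' hc')).1; linarith
    have hq' : 0 < 1 - c' * x := by have := (abs_lt.mp (hcx c' hc')).2; linarith
    exact sFun_eq c' x hp'.ne' hq'.ne'
  have := hg.congr_of_eventuallyEq hev
  convert this using 1
  case e'_4 => rfl
  case e'_5 => rfl
  field_simp [show 1 + x * c ≠ 0 by rw [mul_comm]; exact hp.ne', show 1 - x * c ≠ 0 by rw [mul_comm]; exact hq.ne']
  ring

/-- For `|c| < 1` and `|x| ≤ 1`, the partial derivative of `s(c,x)` with respect to `c`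
is nonpositive; hence `s(c,x)` is nonincreasing in `c` for each fixed `x`. -/
theorem sFun_deriv_nonpos_and_antitone (x : ℝ) (hx : |x| ≤ 1) :
    (∀ c : ℝ, |c| < 1 → deriv (fun c => sFun c x) c ≤ 0) ∧
    (∀ c₁ c₂ : ℝ, |c₁| < 1 → |c₂| < 1 → c₁ ≤ c₂ → sFun c₂ x ≤ sFun c₁ x) := by
  have hL : (0:ℝ) < Real.log 2 := Real.log_pos one_lt_two
  have key : ∀ c : ℝ, |c| < 1 → deriv (fun c => sFun c x) c ≤ 0 := by
    intro c hc
    have h := sFun_hasDerivAt x hx c hc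
    rw [h.deriv]
    have hc' := abs_lt.mp hc
    have hcx : |c * x| < 1 := by
      calc |c * x| = |c| * |x| := abs_mul _ _
        _ ≤ |c| * 1 := by nlinarith [abs_nonneg c]
        _ < 1 := by linarith
    have hp : 0 < 1 + c * x := by have := (abs_lt.mp hcx).1; linarith
    have hq : 0 < 1 - c * x := by have := (abs_lt.mp hcx).2; linarith
    apply div_nonpos_of_nonpos_of_nonneg
    · nlinarith [sq_nonneg x]
    · positivity
  refine ⟨key, ?_⟩
  intro c₁ c₂ h₁ h₂ hle
  have hanti : AntitoneOn (fun c => sFun c x) (Set.Ioo (-1) 1) := by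
    apply antitoneOn_of_deriv_nonpos (convex_Ioo (-1:ℝ) 1)
    · intro c hc
      exact ((sFun_hasDerivAt x hx c (abs_lt.mpr hc)).continuousAt).continuousWithinAt
    · intro c hc
      rw [interior_Ioo] at hc
      exact ((sFun_hasDerivAt x hx c (abs_lt.mpr hc)).differentiableAt).differentiableWithinAt
    · intro c hc
      rw [interior_Ioo] at hc
      exact key c (abs_lt.mpr hc)
  exact hanti (Set.mem_Ioo.mpr (abs_lt.mp h₁)) (Set.mem_Ioo.mpr (abs_lt.mp h₂)) hle
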